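/- Let n be a positive multiple of 3 with n ≥ 3, and let φ be a graph automorphism of VQ_{n-3}. Define φ₂ and φ₃ on the vertex set of VQ_{n-1} by φ₂(x_{n-1}x_{n-2}X_{n-3}) = x̄_{n-1}x_{n-2}φ(X_{n-3}) and φ₃(x_{n-1}x_{n-2}X_{n-3}) = x̄_{n-1}x̄_{n-2}φ(X_{n-3}), where X_{n-3} = x_{n-3}...x_1. Then the map σ₀ on the vertex set of VQ_n defined by σ₀(0 X_{n-1}) = 0 φ₂(X_{n-1}) and σ₀(1 X_{n-1}) = 1 φ₃(X_{n-1}) is a graph automorphism of VQ_n. -/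
import Mathlib


/-- Adjacency relation of the `n`-dimensional varietal hypercube `VQ_n`.
A vertex is a binary string `x_n x_{n-1} ... x_1`, encoded as a function
`X : Fin n → Bool` where `X ⟨k-1, _⟩` is the bit `x_k` (so index `n-1` is the
leading bit `x_n`). -/
def vqAdj : (n : ℕ) → (Fin n → Bool) → (Fin n → Bool) → Prop
  | 0, _, _ => False
  | 1, X, Y => X ≠ Y
  | (n + 2), X, Y =>
    if X (Fin.last (n + 1)) = Y (Fin.last (n + 1)) then
      -- both in the same copy of `VQ_{n+1}`
      vqAdj (n + 1) (Fin.init X) (Fin.init Y)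
    else if (n + 2) % 3 = 0 then
      -- transversal edge, `n + 2` divisible by 3:
      -- `x_{n-3} ... x_1 = y_{n-3} ... y_1` and
      -- `(x_{n-1}x_{n-2}, y_{n-1}y_{n-2}) ∈ {(00,00),(01,01),(10,11),(11,10)}`
      (∀ i : Fin (n + 2), (i : ℕ) < n - 1 → X i = Y i) ∧
      Y ⟨n, by omega⟩ = X ⟨n, by omega⟩ ∧
      Y ⟨n - 1, by omega⟩ = xor (X ⟨n, by omega⟩) (X ⟨n - 1, by omega⟩)
    else
      -- transversal edge, `n + 2` not divisible by 3:
      -- `x_{n-1} ... x_1 = y_{n-1} ... y_1`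
      Fin.init X = Fin.init Y

/-- The `n`-dimensional varietal hypercube. -/
def VQ (n : ℕ) : SimpleGraph (Fin n → Bool) := SimpleGraph.fromRel (vqAdj n)

/-- Apply `f` to the lowest `k` bits of a string of `m` bits, keeping the top
`m - k` bits unchanged. -/
def applyLow {m k : ℕ} (h : k ≤ m) (f : (Fin k → Bool) → (Fin k → Bool))
    (X : Fin m → Bool) : Fin m → Bool :=
  fun i => if h' : (i : ℕ) < k then f (fun j => X (Fin.castLE h j)) ⟨i, h'⟩ else X i

/-- Complement the bit at (0-based) index `t`, keeping all other bits unchanged. -/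
def flipAt {m : ℕ} (t : ℕ) (X : Fin m → Bool) : Fin m → Bool :=
  fun i => if (i : ℕ) = t then !(X i) else X i

lemma vq_irrefl : ∀ (n : ℕ) (X : Fin n → Bool), ¬ vqAdj n X X
  | 0, _ => fun h => h
  | 1, _ => fun h => h rfl
  | (n + 2), X => fun h => by
      rw [vqAdj] at h
      simp only [if_pos rfl] at h
      exact vq_irrefl (n + 1) _ h

lemma vq_symm : ∀ (n : ℕ) (X Y : Fin n → Bool), vqAdj n X Y → vqAdj n Y X
  | 0, _, _ => fun h => h.elim
  | 1, _, _ => fun h => fun e => h e.symm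
  | (n + 2), X, Y => fun h => by
      rw [vqAdj] at h ⊢
      by_cases hc : X (Fin.last (n + 1)) = Y (Fin.last (n + 1))
      · rw [if_pos hc] at h
        rw [if_pos hc.symm]
        exact vq_symm (n + 1) _ _ h
      · rw [if_neg hc] at h
        rw [if_neg (fun e => hc e.symm)]
        by_cases h3 : (n + 2) % 3 = 0
        · rw [if_pos h3] at h ⊢
          obtain ⟨h1, h2, h4⟩ := h
          refine ⟨fun i hi => (h1 i hi).symm, h2.symm, ?_⟩
          rw [h2, h4]
          cases X ⟨n, by omega⟩ <;> cases X ⟨n - 1, by omega⟩ <;> rfl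
        · rw [if_neg h3] at h ⊢
          exact h.symm

lemma vq_adj_iff (n : ℕ) (X Y : Fin n → Bool) : (VQ n).Adj X Y ↔ vqAdj n X Y := by
  rw [VQ, SimpleGraph.fromRel_adj]
  constructor
  · rintro ⟨hne, h | h⟩
    · exact h
    · exact vq_symm n _ _ h
  · intro h
    exact ⟨fun e => vq_irrefl n Y (by rwa [e] at h), Or.inl h⟩

def lw {k : ℕ} (X : Fin (k + 3) → Bool) : Fin k → Bool :=
  fun j => X (Fin.castLE (by omega) j)

lemma init3_eq_iff {k : ℕ} (X Y : Fin (k + 3) → Bool) :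
    Fin.init (Fin.init (Fin.init X)) = Fin.init (Fin.init (Fin.init Y)) ↔
      ∀ i : Fin (k + 3), (i : ℕ) < k → X i = Y i := by
  constructor
  · intro h i hi
    exact congrFun h ⟨i.1, hi⟩
  · intro h
    funext j
    exact h ⟨j.1, by omega⟩ (by exact j.isLt)

lemma init2_eq_iff {k : ℕ} (X Y : Fin (k + 3) → Bool) :
    Fin.init (Fin.init X) = Fin.init (Fin.init Y) ↔
      ∀ i : Fin (k + 3), (i : ℕ) < k + 1 → X i = Y i := by
  constructor
  · intro h i hi
    exact congrFun h ⟨i.1, hi⟩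
  · intro h
    funext j
    exact h ⟨j.1, by omega⟩ (by exact j.isLt)

lemma lw_eq_iff {k : ℕ} (X Y : Fin (k + 3) → Bool) :
    lw X = lw Y ↔ ∀ i : Fin (k + 3), (i : ℕ) < k → X i = Y i := by
  constructor
  · intro h i hi
    exact congrFun h ⟨i.1, hi⟩
  · intro h
    funext j
    exact h ⟨j.1, by omega⟩ (by exact j.isLt)

lemma forall_lt_succ_iff {k : ℕ} (X Y : Fin (k + 3) → Bool) :
    (∀ i : Fin (k + 3), (i : ℕ) < k + 1 → X i = Y i) ↔
      (∀ i : Fin (k + 3), (i : ℕ) < k → X i = Y i) ∧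
        X ⟨k, by omega⟩ = Y ⟨k, by omega⟩ := by
  constructor
  · intro h
    refine ⟨fun i hi => h i (Nat.lt_succ_of_lt hi), h ⟨k, by omega⟩ ?_⟩
    show k < k + 1
    omega
  · rintro ⟨h1, h2⟩ i hi
    rcases Nat.lt_or_ge (i : ℕ) k with hik | hik
    · exact h1 i hik
    · have : i = ⟨k, by omega⟩ := Fin.ext (show (i : ℕ) = k by omega)
      rw [this]
      exact h2

lemma vq_char (k : ℕ) (hk : k % 3 = 0) (X Y : Fin (k + 3) → Bool) :
    vqAdj (k + 3) X Y ↔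
      if X ⟨k + 2, by omega⟩ = Y ⟨k + 2, by omega⟩ then
        if X ⟨k + 1, by omega⟩ = Y ⟨k + 1, by omega⟩ then
          if X ⟨k, by omega⟩ = Y ⟨k, by omega⟩ then vqAdj k (lw X) (lw Y)
          else ∀ i : Fin (k + 3), (i : ℕ) < k → X i = Y i
        else ∀ i : Fin (k + 3), (i : ℕ) < k + 1 → X i = Y i
      else (∀ i : Fin (k + 3), (i : ℕ) < k → X i = Y i) ∧
        Y ⟨k + 1, by omega⟩ = X ⟨k + 1, by omega⟩ ∧
        Y ⟨k, by omega⟩ = xor (X ⟨k + 1, by omega⟩) (X ⟨k, by omega⟩) := by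
  show vqAdj (k + 1 + 2) X Y ↔ _
  rw [vqAdj]
  by_cases h1 : X ⟨k + 2, by omega⟩ = Y ⟨k + 2, by omega⟩
  · rw [if_pos h1, if_pos (show X (Fin.last (k+2)) = Y (Fin.last (k+2)) from h1)]
    show vqAdj (k + 2) (Fin.init X) (Fin.init Y) ↔ _
    rw [vqAdj, if_neg (by omega : ¬ (k + 2) % 3 = 0)]
    by_cases h2 : X ⟨k + 1, by omega⟩ = Y ⟨k + 1, by omega⟩
    · rw [if_pos h2,
        if_pos (show Fin.init X (Fin.last (k+1)) = Fin.init Y (Fin.last (k+1)) from h2)]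
      cases k with
      | zero =>
        show (Fin.init (Fin.init X) ≠ Fin.init (Fin.init Y)) ↔ _
        by_cases h3 : X ⟨0, by omega⟩ = Y ⟨0, by omega⟩
        · rw [if_pos h3]
          have he : Fin.init (Fin.init X) = Fin.init (Fin.init Y) := by
            funext i
            have : i = ⟨0, by omega⟩ := Subsingleton.elim _ _
            subst this
            exact h3
          simp [he, vqAdj]
        · rw [if_neg h3]
          constructor
          · intro _ i hi
            exact absurd hi (by omega)
          · intro _ he
            exact h3 (congrFun he ⟨0, by omega⟩)
      | succ j =>
        show vqAdj (j + 2) (Fin.init (Fin.init X)) (Fin.init (Fin.init Y)) ↔ _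
        rw [vqAdj, if_neg (by omega : ¬ (j + 2) % 3 = 0)]
        by_cases h3 : X ⟨j + 1, by omega⟩ = Y ⟨j + 1, by omega⟩
        · rw [if_pos h3, if_pos (show Fin.init (Fin.init X) (Fin.last (j+1)) =
              Fin.init (Fin.init Y) (Fin.last (j+1)) from h3)]
          rfl
        · rw [if_neg h3, if_neg (show ¬ Fin.init (Fin.init X) (Fin.last (j+1)) =
              Fin.init (Fin.init Y) (Fin.last (j+1)) from h3)]
          exact init3_eq_iff X Y
    · rw [if_neg h2,
        if_neg (show ¬ Fin.init X (Fin.last (k+1)) = Fin.init Y (Fin.last (k+1)) from h2)]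
      exact init2_eq_iff X Y
  · rw [if_neg h1, if_neg (show ¬ X (Fin.last (k+2)) = Y (Fin.last (k+2)) from h1),
      if_pos (by omega : (k + 1 + 2) % 3 = 0)]
    rfl

def sF {k : ℕ} (f : (Fin k → Bool) → (Fin k → Bool)) (X : Fin (k + 3) → Bool) :
    Fin (k + 3) → Bool :=
  fun i =>
    if hi : (i : ℕ) < k then f (lw X) ⟨i, hi⟩
    else if (i : ℕ) = k then (if X ⟨k + 2, by omega⟩ = false then X i else !(X i))
    else if (i : ℕ) = k + 1 then !(X i) else X i

lemma lw_sF {k : ℕ} (f : (Fin k → Bool) → (Fin k → Bool)) (X : Fin (k + 3) → Bool) :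
    lw (sF f X) = f (lw X) := by
  funext j
  show sF f X (Fin.castLE (by omega) j) = _
  rw [sF]
  rw [dif_pos (show ((Fin.castLE (by omega) j : Fin (k + 3)) : ℕ) < k from j.isLt)]
  exact congrArg (f (lw X)) (Fin.ext rfl)

lemma sF_top {k : ℕ} (f : (Fin k → Bool) → (Fin k → Bool)) (X : Fin (k + 3) → Bool)
    (h : k + 2 < k + 3) : sF f X ⟨k + 2, h⟩ = X ⟨k + 2, h⟩ := by
  rw [sF, dif_neg (show ¬ ((⟨k + 2, h⟩ : Fin (k + 3)) : ℕ) < k by simp),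
    if_neg (show ¬ ((⟨k + 2, h⟩ : Fin (k + 3)) : ℕ) = k by simp),
    if_neg (show ¬ ((⟨k + 2, h⟩ : Fin (k + 3)) : ℕ) = k + 1 by simp)]

lemma sF_k1 {k : ℕ} (f : (Fin k → Bool) → (Fin k → Bool)) (X : Fin (k + 3) → Bool)
    (h : k + 1 < k + 3) : sF f X ⟨k + 1, h⟩ = !(X ⟨k + 1, h⟩) := by
  rw [sF, dif_neg (show ¬ ((⟨k + 1, h⟩ : Fin (k + 3)) : ℕ) < k by simp),
    if_neg (show ¬ ((⟨k + 1, h⟩ : Fin (k + 3)) : ℕ) = k by simp),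
    if_pos (show ((⟨k + 1, h⟩ : Fin (k + 3)) : ℕ) = k + 1 from rfl)]

lemma sF_k {k : ℕ} (f : (Fin k → Bool) → (Fin k → Bool)) (X : Fin (k + 3) → Bool)
    (h : k < k + 3) :
    sF f X ⟨k, h⟩ = if X ⟨k + 2, by omega⟩ = false then X ⟨k, h⟩ else !(X ⟨k, h⟩) := by
  rw [sF, dif_neg (show ¬ ((⟨k, h⟩ : Fin (k + 3)) : ℕ) < k by simp),
    if_pos (show ((⟨k, h⟩ : Fin (k + 3)) : ℕ) = k from rfl)]

lemma sF_inv {k : ℕ} (f g : (Fin k → Bool) → (Fin k → Bool))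
    (hfg : ∀ A, g (f A) = A) (X : Fin (k + 3) → Bool) : sF g (sF f X) = X := by
  funext i
  rcases Nat.lt_or_ge (i : ℕ) k with hi | hi
  · show sF g (sF f X) i = X i
    rw [sF, dif_pos hi, lw_sF, hfg]
    exact congrArg X (Fin.ext rfl)
  · have hi3 := i.isLt
    rcases (by omega : (i : ℕ) = k ∨ (i : ℕ) = k + 1 ∨ (i : ℕ) = k + 2) with h | h | h
    · have hik : i = ⟨k, by omega⟩ := Fin.ext h
      rw [hik, sF_k, sF_k, sF_top]
      cases hc : X ⟨k + 2, by omega⟩ <;> simp [hc]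
    · have hik : i = ⟨k + 1, by omega⟩ := Fin.ext h
      rw [hik, sF_k1, sF_k1, Bool.not_not]
    · have hik : i = ⟨k + 2, by omega⟩ := Fin.ext h
      rw [hik, sF_top, sF_top]

lemma sF_low_iff {k : ℕ} (f : (Fin k → Bool) → (Fin k → Bool))
    (hf : Function.Injective f) (X Y : Fin (k + 3) → Bool) :
    (∀ i : Fin (k + 3), (i : ℕ) < k → sF f X i = sF f Y i) ↔
      ∀ i : Fin (k + 3), (i : ℕ) < k → X i = Y i := by
  rw [← lw_eq_iff, ← lw_eq_iff, lw_sF, lw_sF, hf.eq_iff]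

lemma vq_pres (k : ℕ) (hk : k % 3 = 0) (f : (Fin k → Bool) → (Fin k → Bool))
    (hf : Function.Injective f)
    (hvq : ∀ A B, vqAdj k (f A) (f B) ↔ vqAdj k A B)
    (X Y : Fin (k + 3) → Bool) :
    vqAdj (k + 3) (sF f X) (sF f Y) ↔ vqAdj (k + 3) X Y := by
  rw [vq_char k hk, vq_char k hk (X := X), sF_top, sF_top, sF_k1, sF_k1, sF_k, sF_k,
    lw_sF, lw_sF]
  by_cases h1 : X ⟨k + 2, by omega⟩ = Y ⟨k + 2, by omega⟩
  · rw [if_pos h1, if_pos h1]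
    have e2 : ((!X ⟨k + 1, by omega⟩) = !Y ⟨k + 1, by omega⟩) ↔
        (X ⟨k + 1, by omega⟩ = Y ⟨k + 1, by omega⟩) := by simp
    have e3 : ((if X ⟨k + 2, by omega⟩ = false then X ⟨k, by omega⟩ else !(X ⟨k, by omega⟩)) =
        (if Y ⟨k + 2, by omega⟩ = false then Y ⟨k, by omega⟩ else !(Y ⟨k, by omega⟩))) ↔
        (X ⟨k, by omega⟩ = Y ⟨k, by omega⟩) := by
      rw [← h1]
      cases X ⟨k + 2, by omega⟩ <;> simp
    by_cases h2 : X ⟨k + 1, by omega⟩ = Y ⟨k + 1, by omega⟩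
    · rw [if_pos h2, if_pos (e2.mpr h2)]
      by_cases h3 : X ⟨k, by omega⟩ = Y ⟨k, by omega⟩
      · rw [if_pos h3, if_pos (e3.mpr h3)]
        exact hvq _ _
      · rw [if_neg h3, if_neg (fun c => h3 (e3.mp c))]
        exact sF_low_iff f hf X Y
    · rw [if_neg h2, if_neg (fun c => h2 (e2.mp c))]
      rw [forall_lt_succ_iff, forall_lt_succ_iff, sF_k, sF_k]
      exact and_congr (sF_low_iff f hf X Y) e3
  · rw [if_neg h1, if_neg h1]
    refine and_congr (sF_low_iff f hf X Y) (and_congr (by simp) ?_)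
    cases hX : X ⟨k + 2, by omega⟩ <;> cases hY : Y ⟨k + 2, by omega⟩ <;>
      simp only [hX, hY] at h1 ⊢
    · exact absurd trivial h1
    · cases hA : X ⟨k + 1, by omega⟩ <;> cases hB : X ⟨k, by omega⟩ <;>
        cases hC : Y ⟨k, by omega⟩ <;> simp [hA, hB, hC]
    · cases hA : X ⟨k + 1, by omega⟩ <;> cases hB : X ⟨k, by omega⟩ <;>
        cases hC : Y ⟨k, by omega⟩ <;> simp [hA, hB, hC]
    · exact absurd trivial h1

lemma sF_formula {k : ℕ} (f : (Fin k → Bool) → (Fin k → Bool)) (X : Fin (k + 3) → Bool)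
    (h1 : k + 2 ≤ k + 3) (h2 : k ≤ k + 2) (hm : k + 2 < k + 3) :
    sF f X = applyLow h1
      (if X ⟨k + 2, hm⟩ = false then
        (fun Z => flipAt (k + 1) (applyLow h2 f Z))
       else
        (fun Z => flipAt (k + 1) (flipAt k (applyLow h2 f Z)))) X := by
  funext i
  have hi3 := i.isLt
  by_cases hc : X ⟨k + 2, hm⟩ = false
  · rw [if_pos hc]
    simp only [sF, applyLow, flipAt, Fin.val_mk, hc]
    split_ifs <;> first | rfl | omega
  · rw [if_neg hc]
    simp only [sF, applyLow, flipAt, Fin.val_mk, hc]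
    split_ifs <;> first | rfl | omega | simp_all


/-- **Lemma 2.4, case `n = 3k`, `φ = φ₂` when `x_n = 0` and `φ = φ₃` when `x_n = 1`.**
Let `n ≥ 3` be a multiple of `3` and `φ` an automorphism of `VQ_{n-3}`. With
`φ₂ : x_{n-1} x_{n-2} X_{n-3} ↦ x̄_{n-1} x_{n-2} φ(X_{n-3})` and
`φ₃ : x_{n-1} x_{n-2} X_{n-3} ↦ x̄_{n-1} x̄_{n-2} φ(X_{n-3})` on the vertices of
`VQ_{n-1}`, the map `σ₀` defined by `σ₀(0 X_{n-1}) = 0 φ₂(X_{n-1})` and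
`σ₀(1 X_{n-1}) = 1 φ₃(X_{n-1})` is a graph automorphism of `VQ_n`. -/
theorem VQ_sigma0_phi32_isAutomorphism (n : ℕ) (h3 : n % 3 = 0) (hn : 3 ≤ n)
    (φ : VQ (n - 3) ≃g VQ (n - 3)) :
    ∃ σ : VQ n ≃g VQ n, ∀ X : Fin n → Bool,
      σ X = applyLow (by omega : n - 1 ≤ n)
        (if X ⟨n - 1, by omega⟩ = false then
          fun Z => flipAt (n - 2) (applyLow (by omega : n - 3 ≤ n - 1) (⇑φ) Z)
         else
          fun Z => flipAt (n - 2) (flipAt (n - 3) (applyLow (by omega : n - 3 ≤ n - 1) (⇑φ) Z))) X := by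
  obtain ⟨k, rfl⟩ : ∃ k, n = k + 3 := ⟨n - 3, by omega⟩
  have hk : k % 3 = 0 := by omega
  have hvq : ∀ A B : Fin k → Bool, vqAdj k (φ A) (φ B) ↔ vqAdj k A B := by
    intro A B
    rw [← vq_adj_iff, ← vq_adj_iff]
    exact φ.map_adj_iff
  refine ⟨⟨⟨sF (⇑φ), sF (⇑φ.symm), fun X => sF_inv _ _ (fun A => φ.symm_apply_apply A) X,
      fun X => sF_inv _ _ (fun A => φ.apply_symm_apply A) X⟩, ?_⟩, ?_⟩
  · intro X Y
    show (VQ (k + 3)).Adj (sF (⇑φ) X) (sF (⇑φ) Y) ↔ (VQ (k + 3)).Adj X Y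
    rw [vq_adj_iff, vq_adj_iff]
    exact vq_pres k hk (⇑φ) φ.injective hvq X Y
  · intro X
    show sF (⇑φ) X = _
    exact sF_formula (⇑φ) X (by omega) (by omega) (by omega)
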